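/- In circular Nim CN(8,3), if a position p has minima of its two 'squares' at distance 3 apart (normalized so p = (0, x₁, x₂, 0, x₄, x₅, x₆, x₇) after subtracting the square minima), then p belongs to the same outcome class (P or N) as the associated CN(5,2) position (x₁, x₂, x₄, x₅+x₆, x₇); moreover, every CN(8,3) position whose reduced excess vector (x₂,...,x₇) with x₁ = 0 (adjacent minima case) is a P-position of PathNim PN(6,3) also has minima at distance three apart and its associated CN(5,2) position is a P-position of CN(5,2). -/
import Mathlib


/-- A legal move in SetNim: at least one stack strictly decreases, all changed
stacks lie in some allowed move set, stacks weakly decrease. -/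
def Move {V : Type} (A : Set (Set V)) (p q : V → ℕ) : Prop :=
  q ≠ p ∧ (∀ i, q i ≤ p i) ∧ ∃ a ∈ A, ∀ i, q i ≠ p i → i ∈ a

/-- P-positions: positions all of whose options are N-positions. -/
def PPos {V : Type} [Fintype V] (A : Set (Set V)) (p : V → ℕ) : Prop :=
  ∀ q, Move A p q → ¬ PPos A q
termination_by Finset.univ.sum p
decreasing_by
  rename_i hq
  obtain ⟨hne, hle, -⟩ := hq
  refine Finset.sum_lt_sum (fun i _ => hle i) ?_
  obtain ⟨i, hi⟩ := Function.ne_iff.mp hne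
  exact ⟨i, Finset.mem_univ i, lt_of_le_of_ne (hle i) hi⟩

/-- Move sets of circular Nim CN(8,3): three consecutive stacks. -/
def CN83 : Set (Set (Fin 8)) := {s | ∃ i : Fin 8, s = {i, i + 1, i + 2}}

/-- Move sets of circular Nim CN(5,2): two consecutive stacks. -/
def CN52 : Set (Set (Fin 5)) := {s | ∃ i : Fin 5, s = {i, i + 1}}

/-- Move sets of PathNim PN(6,3): three consecutive stacks on a path. -/
def PN63 : Set (Set (Fin 6)) := {{0, 1, 2}, {1, 2, 3}, {2, 3, 4}, {3, 4, 5}}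

/-- The dihedral symmetries of the 8-cycle. -/
def dih8 (k : Fin 8) (s : Bool) : Fin 8 → Fin 8 := fun i => if s then k - i else k + i

@[simp] theorem cv8_0 (a0 a1 a2 a3 a4 a5 a6 a7 : ℕ) : ![a0,a1,a2,a3,a4,a5,a6,a7] (0:Fin 8) = a0 := rfl
@[simp] theorem cv8_1 (a0 a1 a2 a3 a4 a5 a6 a7 : ℕ) : ![a0,a1,a2,a3,a4,a5,a6,a7] (1:Fin 8) = a1 := rfl
@[simp] theorem cv8_2 (a0 a1 a2 a3 a4 a5 a6 a7 : ℕ) : ![a0,a1,a2,a3,a4,a5,a6,a7] (2:Fin 8) = a2 := rfl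
@[simp] theorem cv8_3 (a0 a1 a2 a3 a4 a5 a6 a7 : ℕ) : ![a0,a1,a2,a3,a4,a5,a6,a7] (3:Fin 8) = a3 := rfl
@[simp] theorem cv8_4 (a0 a1 a2 a3 a4 a5 a6 a7 : ℕ) : ![a0,a1,a2,a3,a4,a5,a6,a7] (4:Fin 8) = a4 := rfl
@[simp] theorem cv8_5 (a0 a1 a2 a3 a4 a5 a6 a7 : ℕ) : ![a0,a1,a2,a3,a4,a5,a6,a7] (5:Fin 8) = a5 := rfl
@[simp] theorem cv8_6 (a0 a1 a2 a3 a4 a5 a6 a7 : ℕ) : ![a0,a1,a2,a3,a4,a5,a6,a7] (6:Fin 8) = a6 := rfl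
@[simp] theorem cv8_7 (a0 a1 a2 a3 a4 a5 a6 a7 : ℕ) : ![a0,a1,a2,a3,a4,a5,a6,a7] (7:Fin 8) = a7 := rfl
@[simp] theorem cv6_0 (a0 a1 a2 a3 a4 a5 : ℕ) : ![a0,a1,a2,a3,a4,a5] (0:Fin 6) = a0 := rfl
@[simp] theorem cv6_1 (a0 a1 a2 a3 a4 a5 : ℕ) : ![a0,a1,a2,a3,a4,a5] (1:Fin 6) = a1 := rfl
@[simp] theorem cv6_2 (a0 a1 a2 a3 a4 a5 : ℕ) : ![a0,a1,a2,a3,a4,a5] (2:Fin 6) = a2 := rfl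
@[simp] theorem cv6_3 (a0 a1 a2 a3 a4 a5 : ℕ) : ![a0,a1,a2,a3,a4,a5] (3:Fin 6) = a3 := rfl
@[simp] theorem cv6_4 (a0 a1 a2 a3 a4 a5 : ℕ) : ![a0,a1,a2,a3,a4,a5] (4:Fin 6) = a4 := rfl
@[simp] theorem cv6_5 (a0 a1 a2 a3 a4 a5 : ℕ) : ![a0,a1,a2,a3,a4,a5] (5:Fin 6) = a5 := rfl
@[simp] theorem cv5_0 (a0 a1 a2 a3 a4 : ℕ) : ![a0,a1,a2,a3,a4] (0:Fin 5) = a0 := rfl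
@[simp] theorem cv5_1 (a0 a1 a2 a3 a4 : ℕ) : ![a0,a1,a2,a3,a4] (1:Fin 5) = a1 := rfl
@[simp] theorem cv5_2 (a0 a1 a2 a3 a4 : ℕ) : ![a0,a1,a2,a3,a4] (2:Fin 5) = a2 := rfl
@[simp] theorem cv5_3 (a0 a1 a2 a3 a4 : ℕ) : ![a0,a1,a2,a3,a4] (3:Fin 5) = a3 := rfl
@[simp] theorem cv5_4 (a0 a1 a2 a3 a4 : ℕ) : ![a0,a1,a2,a3,a4] (4:Fin 5) = a4 := rfl

theorem PPos_iff {V : Type} [Fintype V] (A : Set (Set V)) (p : V → ℕ) :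
    PPos A p ↔ ∀ q, Move A p q → ¬ PPos A q := by
  rw [PPos]

theorem move_sum_lt {V : Type} [Fintype V] {A : Set (Set V)} {p q : V → ℕ}
    (h : Move A p q) : Finset.univ.sum q < Finset.univ.sum p := by
  obtain ⟨hne, hle, -⟩ := h
  refine Finset.sum_lt_sum (fun i _ => hle i) ?_
  obtain ⟨i, hi⟩ := Function.ne_iff.mp hne
  exact ⟨i, Finset.mem_univ i, lt_of_le_of_ne (hle i) hi⟩

theorem bisim {V W : Type} [Fintype V] [Fintype W] (A : Set (Set V)) (B : Set (Set W))
    (R : (V → ℕ) → (W → ℕ) → Prop)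
    (fwd : ∀ p q p', R p q → Move A p p' → ∃ q', Move B q q' ∧ R p' q')
    (bwd : ∀ p q q', R p q → Move B q q' → ∃ p', Move A p p' ∧ R p' q') :
    ∀ p q, R p q → (PPos A p ↔ PPos B q) := by
  have key : ∀ n p q, Finset.univ.sum p + Finset.univ.sum q ≤ n → R p q →
      (PPos A p ↔ PPos B q) := by
    intro n
    induction n using Nat.strong_induction_on with
    | _ n IH =>
      intro p q hn hR
      constructor
      · intro hP
        rw [PPos_iff]
        intro q' hmv hq'P
        obtain ⟨p', hmv', hR'⟩ := bwd p q q' hR hmv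
        have h1 : ¬ PPos A p' := (PPos_iff A p).mp hP p' hmv'
        have hlt : Finset.univ.sum p' + Finset.univ.sum q' <
            Finset.univ.sum p + Finset.univ.sum q :=
          Nat.add_lt_add (move_sum_lt hmv') (move_sum_lt hmv)
        exact h1 ((IH _ (lt_of_lt_of_le hlt hn) p' q' le_rfl hR').mpr hq'P)
      · intro hP
        rw [PPos_iff]
        intro p' hmv hp'P
        obtain ⟨q', hmv', hR'⟩ := fwd p q p' hR hmv
        have h1 : ¬ PPos B q' := (PPos_iff B q).mp hP q' hmv'
        have hlt : Finset.univ.sum p' + Finset.univ.sum q' <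
            Finset.univ.sum p + Finset.univ.sum q :=
          Nat.add_lt_add (move_sum_lt hmv) (move_sum_lt hmv')
        exact h1 ((IH _ (lt_of_lt_of_le hlt hn) p' q' le_rfl hR').mp hp'P)
  exact fun p q => key _ p q le_rfl

def R1 (p : Fin 8 → ℕ) (q : Fin 5 → ℕ) : Prop :=
  p 0 = 0 ∧ p 3 = 0 ∧ q 0 = p 1 ∧ q 1 = p 2 ∧ q 2 = p 4 ∧ q 3 = p 5 + p 6 ∧ q 4 = p 7

theorem memhelp {V : Type} (u v : V → ℕ) (s : Set V)
    (h : ∀ j, j ∉ s → u j = v j) : ∀ j, u j ≠ v j → j ∈ s := fun j hj => by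
  by_contra hc; exact hj (h j hc)

theorem fwd1 : ∀ p q p', R1 p q → Move CN83 p p' → ∃ q', Move CN52 q q' ∧ R1 p' q' := by
  rintro p q p' ⟨h0, h3, e0, e1, e2, e3, e4⟩ ⟨hne, hle, a, ⟨i, rfl⟩, hmem⟩
  have hp'0 : p' 0 = 0 := Nat.le_zero.mp (h0 ▸ hle 0)
  have hp'3 : p' 3 = 0 := Nat.le_zero.mp (h3 ▸ hle 3)
  have hfix : ∀ j : Fin 8, j ∉ ({i, i + 1, i + 2} : Set (Fin 8)) → p' j = p j := by
    intro j hj; by_contra h; exact hj (hmem j h)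
  refine ⟨![p' 1, p' 2, p' 4, p' 5 + p' 6, p' 7], ⟨?_, ?_, ?_⟩,
    hp'0, hp'3, by simp, by simp, by simp, by simp, by simp⟩
  · obtain ⟨j, hj⟩ := Function.ne_iff.mp hne
    rw [Function.ne_iff]
    fin_cases j
    · exact absurd (hp'0.trans h0.symm) hj
    · exact ⟨0, by simpa [e0] using hj⟩
    · exact ⟨1, by simpa [e1] using hj⟩
    · exact absurd (hp'3.trans h3.symm) hj
    · exact ⟨2, by simpa [e2] using hj⟩
    · have hj' : p' 5 ≠ p 5 := hj
      refine ⟨3, by simp [e3]; have h5 := hle 5; have h6 := hle 6; omega⟩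
    · have hj' : p' 6 ≠ p 6 := hj
      refine ⟨3, by simp [e3]; have h5 := hle 5; have h6 := hle 6; omega⟩
    · exact ⟨4, by simpa [e4] using hj⟩
  · intro j
    fin_cases j
    · simpa [e0] using hle 1
    · simpa [e1] using hle 2
    · simpa [e2] using hle 4
    · simpa [e3] using Nat.add_le_add (hle 5) (hle 6)
    · simpa [e4] using hle 7
  · fin_cases i
    · refine ⟨{0, 1}, ⟨0, rfl⟩, memhelp _ _ _ ?_⟩
      intro j hj; fin_cases j
      · exact absurd (by decide) hj
      · exact absurd (by decide) hj
      · simp [e2, hfix 4 (by decide)]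
      · simp [e3, hfix 5 (by decide), hfix 6 (by decide)]
      · simp [e4, hfix 7 (by decide)]
    · refine ⟨{0, 1}, ⟨0, rfl⟩, memhelp _ _ _ ?_⟩
      intro j hj; fin_cases j
      · exact absurd (by decide) hj
      · exact absurd (by decide) hj
      · simp [e2, hfix 4 (by decide)]
      · simp [e3, hfix 5 (by decide), hfix 6 (by decide)]
      · simp [e4, hfix 7 (by decide)]
    · refine ⟨{1, 2}, ⟨1, rfl⟩, memhelp _ _ _ ?_⟩
      intro j hj; fin_cases j
      · simp [e0, hfix 1 (by decide)]
      · exact absurd (by decide) hj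
      · exact absurd (by decide) hj
      · simp [e3, hfix 5 (by decide), hfix 6 (by decide)]
      · simp [e4, hfix 7 (by decide)]
    · refine ⟨{2, 3}, ⟨2, rfl⟩, memhelp _ _ _ ?_⟩
      intro j hj; fin_cases j
      · simp [e0, hfix 1 (by decide)]
      · simp [e1, hfix 2 (by decide)]
      · exact absurd (by decide) hj
      · exact absurd (by decide) hj
      · simp [e4, hfix 7 (by decide)]
    · refine ⟨{2, 3}, ⟨2, rfl⟩, memhelp _ _ _ ?_⟩
      intro j hj; fin_cases j
      · simp [e0, hfix 1 (by decide)]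
      · simp [e1, hfix 2 (by decide)]
      · exact absurd (by decide) hj
      · exact absurd (by decide) hj
      · simp [e4, hfix 7 (by decide)]
    · refine ⟨{3, 4}, ⟨3, rfl⟩, memhelp _ _ _ ?_⟩
      intro j hj; fin_cases j
      · simp [e0, hfix 1 (by decide)]
      · simp [e1, hfix 2 (by decide)]
      · simp [e2, hfix 4 (by decide)]
      · exact absurd (by decide) hj
      · exact absurd (by decide) hj
    · refine ⟨{3, 4}, ⟨3, rfl⟩, memhelp _ _ _ ?_⟩
      intro j hj; fin_cases j
      · simp [e0, hfix 1 (by decide)]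
      · simp [e1, hfix 2 (by decide)]
      · simp [e2, hfix 4 (by decide)]
      · exact absurd (by decide) hj
      · exact absurd (by decide) hj
    · refine ⟨{4, 0}, ⟨4, rfl⟩, memhelp _ _ _ ?_⟩
      intro j hj; fin_cases j
      · exact absurd (by decide) hj
      · simp [e1, hfix 2 (by decide)]
      · simp [e2, hfix 4 (by decide)]
      · simp [e3, hfix 5 (by decide), hfix 6 (by decide)]
      · exact absurd (by decide) hj

theorem bwd1 : ∀ p q q', R1 p q → Move CN52 q q' → ∃ p', Move CN83 p p' ∧ R1 p' q' := by
  rintro p q q' ⟨h0, h3, e0, e1, e2, e3, e4⟩ ⟨hne, hle, a, ⟨i, rfl⟩, hmem⟩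
  have hfix : ∀ j : Fin 5, j ∉ ({i, i + 1} : Set (Fin 5)) → q' j = q j := by
    intro j hj; by_contra h; exact hj (hmem j h)
  fin_cases i
  · -- {0,1} : change p1,p2 via {1,2,3}
    refine ⟨![0, q' 0, q' 1, 0, p 4, p 5, p 6, p 7],
      ⟨?_, ?_, ⟨_, ⟨1, rfl⟩, memhelp _ _ _ ?_⟩⟩, by simp, by simp, by simp, by simp, ?_, ?_, ?_⟩
    · obtain ⟨j, hj⟩ := Function.ne_iff.mp hne
      rw [Function.ne_iff]
      fin_cases j
      · exact ⟨1, by simpa [e0] using hj⟩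
      · exact ⟨2, by simpa [e1] using hj⟩
      · exact absurd (hfix 2 (by decide)) hj
      · exact absurd (hfix 3 (by decide)) hj
      · exact absurd (hfix 4 (by decide)) hj
    · intro j
      fin_cases j
      · simp [h0]
      · simpa [e0] using hle 0
      · simpa [e1] using hle 1
      · simp
      · simp
      · simp
      · simp
      · simp
    · intro j hj
      fin_cases j
      · simp [h0]
      · exact absurd (by decide) hj
      · exact absurd (by decide) hj
      · exact absurd (by decide) hj
      · simp
      · simp
      · simp
      · simp
    · simp [hfix 2 (by decide), e2]
    · simp [hfix 3 (by decide), e3]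
    · simp [hfix 4 (by decide), e4]
  · -- {1,2} : change p2,p4 via {2,3,4}
    refine ⟨![0, p 1, q' 1, 0, q' 2, p 5, p 6, p 7],
      ⟨?_, ?_, ⟨_, ⟨2, rfl⟩, memhelp _ _ _ ?_⟩⟩, by simp, by simp, ?_, by simp, by simp, ?_, ?_⟩
    · obtain ⟨j, hj⟩ := Function.ne_iff.mp hne
      rw [Function.ne_iff]
      fin_cases j
      · exact absurd (hfix 0 (by decide)) hj
      · exact ⟨2, by simpa [e1] using hj⟩
      · exact ⟨4, by simpa [e2] using hj⟩
      · exact absurd (hfix 3 (by decide)) hj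
      · exact absurd (hfix 4 (by decide)) hj
    · intro j
      fin_cases j
      · simp [h0]
      · simp
      · simpa [e1] using hle 1
      · simp
      · simpa [e2] using hle 2
      · simp
      · simp
      · simp
    · intro j hj
      fin_cases j
      · simp [h0]
      · simp
      · exact absurd (by decide) hj
      · exact absurd (by decide) hj
      · exact absurd (by decide) hj
      · simp
      · simp
      · simp
    · simp [hfix 0 (by decide), e0]
    · simp [hfix 3 (by decide), e3]
    · simp [hfix 4 (by decide), e4]
  · -- {2,3} : change p4,(p5,p6) via {4,5,6}
    refine ⟨![0, p 1, p 2, 0, q' 2, q' 3 - min (q' 3) (p 6), min (q' 3) (p 6), p 7],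
      ⟨?_, ?_, ⟨_, ⟨4, rfl⟩, memhelp _ _ _ ?_⟩⟩, by simp, by simp, ?_, ?_, by simp, ?_, ?_⟩
    · obtain ⟨j, hj⟩ := Function.ne_iff.mp hne
      rw [Function.ne_iff]
      fin_cases j
      · exact absurd (hfix 0 (by decide)) hj
      · exact absurd (hfix 1 (by decide)) hj
      · exact ⟨4, by simpa [e2] using hj⟩
      · have hj' : q' 3 ≠ q 3 := hj
        rw [e3] at hj'
        by_contra hc
        push_neg at hc
        have h5 := hc 5
        have h6 := hc 6
        simp at h5 h6
        omega
      · exact absurd (hfix 4 (by decide)) hj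
    · intro j
      have h3' := hle 3
      rw [e3] at h3'
      fin_cases j
      · simp [h0]
      · simp
      · simp
      · simp
      · simpa [e2] using hle 2
      · simp <;> omega
      · simp <;> omega
      · simp
    · intro j hj
      fin_cases j
      · simp [h0]
      · simp
      · simp
      · simp [h3]
      · exact absurd (by decide) hj
      · exact absurd (by decide) hj
      · exact absurd (by decide) hj
      · simp
    · simp [hfix 0 (by decide), e0]
    · simp [hfix 1 (by decide), e1]
    · simp <;> omega
    · simp [hfix 4 (by decide), e4]
  · -- {3,4} : change (p5,p6),p7 via {5,6,7}
    refine ⟨![0, p 1, p 2, 0, p 4, q' 3 - min (q' 3) (p 6), min (q' 3) (p 6), q' 4],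
      ⟨?_, ?_, ⟨_, ⟨5, rfl⟩, memhelp _ _ _ ?_⟩⟩, by simp, by simp, ?_, ?_, ?_, ?_, by simp⟩
    · obtain ⟨j, hj⟩ := Function.ne_iff.mp hne
      rw [Function.ne_iff]
      fin_cases j
      · exact absurd (hfix 0 (by decide)) hj
      · exact absurd (hfix 1 (by decide)) hj
      · exact absurd (hfix 2 (by decide)) hj
      · have hj' : q' 3 ≠ q 3 := hj
        rw [e3] at hj'
        by_contra hc
        push_neg at hc
        have h5 := hc 5
        have h6 := hc 6
        simp at h5 h6
        omega
      · exact ⟨7, by simpa [e4] using hj⟩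
    · intro j
      have h3' := hle 3
      rw [e3] at h3'
      fin_cases j
      · simp [h0]
      · simp
      · simp
      · simp
      · simp
      · simp <;> omega
      · simp <;> omega
      · simpa [e4] using hle 4
    · intro j hj
      fin_cases j
      · simp [h0]
      · simp
      · simp
      · simp [h3]
      · simp
      · exact absurd (by decide) hj
      · exact absurd (by decide) hj
      · exact absurd (by decide) hj
    · simp [hfix 0 (by decide), e0]
    · simp [hfix 1 (by decide), e1]
    · simp [hfix 2 (by decide), e2]
    · simp <;> omega
  · -- {4,0} : change p7,p1 via {7,0,1}
    refine ⟨![0, q' 0, p 2, 0, p 4, p 5, p 6, q' 4],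
      ⟨?_, ?_, ⟨_, ⟨7, rfl⟩, memhelp _ _ _ ?_⟩⟩, by simp, by simp, by simp, ?_, ?_, ?_, by simp⟩
    · obtain ⟨j, hj⟩ := Function.ne_iff.mp hne
      rw [Function.ne_iff]
      fin_cases j
      · exact ⟨1, by simpa [e0] using hj⟩
      · exact absurd (hfix 1 (by decide)) hj
      · exact absurd (hfix 2 (by decide)) hj
      · exact absurd (hfix 3 (by decide)) hj
      · exact ⟨7, by simpa [e4] using hj⟩
    · intro j
      fin_cases j
      · simp [h0]
      · simpa [e0] using hle 0
      · simp
      · simp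
      · simp
      · simp
      · simp
      · simpa [e4] using hle 4
    · intro j hj
      fin_cases j
      · simp [h0]
      · exact absurd (by decide) hj
      · simp
      · simp [h3]
      · simp
      · simp
      · simp
      · exact absurd (by decide) hj
    · simp [hfix 1 (by decide), e1]
    · simp [hfix 2 (by decide), e2]
    · simp [hfix 3 (by decide), e3]

theorem Sp : ∀ n B C, B + C ≤ n → PPos CN52 ![0, B + C, 0, B, C] := by
  intro n
  induction n using Nat.strong_induction_on with
  | _ n IH =>
  intro B C hn
  rw [PPos_iff]
  rintro t ⟨hne, hle, a, ⟨i, rfl⟩, hmem⟩ hPt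
  have hfix : ∀ j : Fin 5, j ∉ ({i, i + 1} : Set (Fin 5)) → t j = ![0, B + C, 0, B, C] j := by
    intro j hj; by_contra h; exact hj (hmem j h)
  have h0 : t 0 = 0 := Nat.le_zero.mp (by simpa using hle 0)
  have h2 : t 2 = 0 := Nat.le_zero.mp (by simpa using hle 2)
  have h1 : t 1 ≤ B + C := by simpa using hle 1
  have h3 : t 3 ≤ B := by simpa using hle 3
  have h4 : t 4 ≤ C := by simpa using hle 4
  fin_cases i
  ·
    have f3 : t 3 = B := by simpa using hfix 3 (by decide)
    have f4 : t 4 = C := by simpa using hfix 4 (by decide)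
    have hlt : t 1 < B + C := by
      rcases Function.ne_iff.mp hne with ⟨j, hj⟩
      fin_cases j <;> simp_all <;> omega
    have hP : PPos CN52 ![0, t 1, 0, min (t 1) B, t 1 - min (t 1) B] := by
      have hsum : min (t 1) B + (t 1 - min (t 1) B) = t 1 := by omega
      have := IH (n - 1) (by omega) (min (t 1) B) (t 1 - min (t 1) B) (by omega)
      rwa [hsum] at this
    refine (PPos_iff _ _).mp hPt _ ⟨?_, ?_, ⟨_, ⟨3, rfl⟩, memhelp _ _ _ ?_⟩⟩ hP
    · intro hc
      have c3 := congrFun hc 3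
      have c4 := congrFun hc 4
      simp [f3, f4] at c3 c4
      omega
    · intro j; fin_cases j <;> simp [h0, h2, f3, f4] <;> omega
    · intro j hj
      fin_cases j
      · simp [h0]
      · simp
      · simp [h2]
      · exact absurd (by decide) hj
      · exact absurd (by decide) hj
  ·
    have f3 : t 3 = B := by simpa using hfix 3 (by decide)
    have f4 : t 4 = C := by simpa using hfix 4 (by decide)
    have hlt : t 1 < B + C := by
      rcases Function.ne_iff.mp hne with ⟨j, hj⟩
      fin_cases j <;> simp_all <;> omega
    have hP : PPos CN52 ![0, t 1, 0, min (t 1) B, t 1 - min (t 1) B] := by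
      have hsum : min (t 1) B + (t 1 - min (t 1) B) = t 1 := by omega
      have := IH (n - 1) (by omega) (min (t 1) B) (t 1 - min (t 1) B) (by omega)
      rwa [hsum] at this
    refine (PPos_iff _ _).mp hPt _ ⟨?_, ?_, ⟨_, ⟨3, rfl⟩, memhelp _ _ _ ?_⟩⟩ hP
    · intro hc
      have c3 := congrFun hc 3
      have c4 := congrFun hc 4
      simp [f3, f4] at c3 c4
      omega
    · intro j; fin_cases j <;> simp [h0, h2, f3, f4] <;> omega
    · intro j hj
      fin_cases j
      · simp [h0]
      · simp
      · simp [h2]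
      · exact absurd (by decide) hj
      · exact absurd (by decide) hj
  ·
    have f1 : t 1 = B + C := by simpa using hfix 1 (by decide)
    have f4 : t 4 = C := by simpa using hfix 4 (by decide)
    have hlt : t 3 + t 4 < B + C := by
      rcases Function.ne_iff.mp hne with ⟨j, hj⟩
      fin_cases j <;> simp_all <;> omega
    have hP : PPos CN52 ![0, t 3 + t 4, 0, t 3, t 4] :=
      IH (n - 1) (by omega) (t 3) (t 4) (by omega)
    refine (PPos_iff _ _).mp hPt _ ⟨?_, ?_, ⟨_, ⟨0, rfl⟩, memhelp _ _ _ ?_⟩⟩ hP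
    · intro hc
      have c1 := congrFun hc 1
      simp [f1] at c1
      omega
    · intro j; fin_cases j <;> simp [h0, h2, f1] <;> omega
    · intro j hj
      fin_cases j
      · exact absurd (by decide) hj
      · exact absurd (by decide) hj
      · simp [h2]
      · simp
      · simp
  ·
    have f1 : t 1 = B + C := by simpa using hfix 1 (by decide)
    have hlt : t 3 + t 4 < B + C := by
      rcases Function.ne_iff.mp hne with ⟨j, hj⟩
      fin_cases j <;> simp_all <;> omega
    have hP : PPos CN52 ![0, t 3 + t 4, 0, t 3, t 4] :=
      IH (n - 1) (by omega) (t 3) (t 4) (by omega)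
    refine (PPos_iff _ _).mp hPt _ ⟨?_, ?_, ⟨_, ⟨0, rfl⟩, memhelp _ _ _ ?_⟩⟩ hP
    · intro hc
      have c1 := congrFun hc 1
      simp [f1] at c1
      omega
    · intro j; fin_cases j <;> simp [h0, h2, f1] <;> omega
    · intro j hj
      fin_cases j
      · exact absurd (by decide) hj
      · exact absurd (by decide) hj
      · simp [h2]
      · simp
      · simp
  ·
    have f1 : t 1 = B + C := by simpa using hfix 1 (by decide)
    have f3 : t 3 = B := by simpa using hfix 3 (by decide)
    have hlt : t 3 + t 4 < B + C := by
      rcases Function.ne_iff.mp hne with ⟨j, hj⟩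
      fin_cases j <;> simp_all <;> omega
    have hP : PPos CN52 ![0, t 3 + t 4, 0, t 3, t 4] :=
      IH (n - 1) (by omega) (t 3) (t 4) (by omega)
    refine (PPos_iff _ _).mp hPt _ ⟨?_, ?_, ⟨_, ⟨0, rfl⟩, memhelp _ _ _ ?_⟩⟩ hP
    · intro hc
      have c1 := congrFun hc 1
      simp [f1] at c1
      omega
    · intro j; fin_cases j <;> simp [h0, h2, f1] <;> omega
    · intro j hj
      fin_cases j
      · exact absurd (by decide) hj
      · exact absurd (by decide) hj
      · simp [h2]
      · simp
      · simp

theorem shift52 (c : Fin 5) (q : Fin 5 → ℕ) (h : PPos CN52 q) :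
    PPos CN52 (fun j => q (j + c)) := by
  refine (bisim CN52 CN52 (fun q r => r = fun j => q (j + c)) ?_ ?_ q _ rfl).mp h
  · rintro p r p' rfl ⟨hne, hle, a, ⟨i, rfl⟩, hmem⟩
    refine ⟨fun j => p' (j + c), ⟨?_, fun j => hle (j + c),
      ⟨{i - c, i - c + 1}, ⟨i - c, rfl⟩, ?_⟩⟩, rfl⟩
    · obtain ⟨j, hj⟩ := Function.ne_iff.mp hne
      rw [Function.ne_iff]
      exact ⟨j - c, by simpa [sub_add_cancel] using hj⟩
    · intro j hj
      have := hmem (j + c) hj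
      simp only [Set.mem_insert_iff, Set.mem_singleton_iff] at this ⊢
      rcases this with h' | h'
      · exact Or.inl (eq_sub_iff_add_eq.mpr h')
      · exact Or.inr (by rw [sub_add_eq_add_sub]; exact eq_sub_iff_add_eq.mpr h')
  · rintro p r r' rfl ⟨hne, hle, a, ⟨i, rfl⟩, hmem⟩
    refine ⟨fun j => r' (j - c), ⟨?_, ?_, ⟨{i + c, i + c + 1}, ⟨i + c, rfl⟩, ?_⟩⟩, ?_⟩
    · obtain ⟨j, hj⟩ := Function.ne_iff.mp hne
      rw [Function.ne_iff]
      refine ⟨j + c, by simpa [add_sub_cancel_right] using hj⟩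
    · intro j
      have := hle (j - c)
      simpa [sub_add_cancel] using this
    · intro j hj
      have hj' : r' (j - c) ≠ p ((j - c) + c) := by rwa [sub_add_cancel]
      have := hmem (j - c) hj'
      simp only [Set.mem_insert_iff, Set.mem_singleton_iff] at this ⊢
      rcases this with h' | h'
      · exact Or.inl (sub_eq_iff_eq_add.mp h')
      · exact Or.inr (by rw [sub_eq_iff_eq_add] at h'; rw [h', add_right_comm])
    · funext j
      simp [add_sub_cancel_right]

def T (y : Fin 6 → ℕ) : Prop :=
  (y 1 = 0 ∧ y 2 = 0 ∧ y 0 = y 3 + y 4 + y 5) ∨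
  (y 2 = 0 ∧ y 3 = 0 ∧ y 0 + y 1 = y 4 + y 5) ∨
  (y 3 = 0 ∧ y 4 = 0 ∧ y 0 + y 1 + y 2 = y 5)

theorem escape : ∀ y : Fin 6 → ℕ, ¬ T y → ∃ u, Move PN63 y u ∧ T u := by
  intro y hT
  by_cases hA : y 3 + y 4 + y 5 ≤ y 0
  · refine ⟨![y 3 + y 4 + y 5, 0, 0, y 3, y 4, y 5], ⟨?_, ?_, ⟨{0,1,2}, Or.inl rfl, ?_⟩⟩, ?_⟩
    · intro hc
      have c0 := congrFun hc 0; have c1 := congrFun hc 1; have c2 := congrFun hc 2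
      simp at c0 c1 c2
      exact hT (Or.inl ⟨c1.symm, c2.symm, by omega⟩)
    · intro j; fin_cases j <;> simp <;> omega
    · intro j hj
      fin_cases j
      · decide
      · decide
      · decide
      · exact absurd rfl hj
      · exact absurd rfl hj
      · exact absurd rfl hj
    · exact Or.inl ⟨rfl, rfl, by simp⟩
  by_cases hB : y 0 + y 1 + y 2 ≤ y 5
  · refine ⟨![y 0, y 1, y 2, 0, 0, y 0 + y 1 + y 2], ⟨?_, ?_,
      ⟨{3,4,5}, Or.inr (Or.inr (Or.inr rfl)), ?_⟩⟩, ?_⟩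
    · intro hc
      have c3 := congrFun hc 3; have c4 := congrFun hc 4; have c5 := congrFun hc 5
      simp at c3 c4 c5
      exact hT (Or.inr (Or.inr ⟨c3.symm, c4.symm, by omega⟩))
    · intro j; fin_cases j <;> simp <;> omega
    · intro j hj
      fin_cases j
      · exact absurd rfl hj
      · exact absurd rfl hj
      · exact absurd rfl hj
      · decide
      · decide
      · decide
    · exact Or.inr (Or.inr ⟨rfl, rfl, by simp⟩)
  by_cases hC : y 4 + y 5 ≤ y 0 + y 1
  · by_cases hD : y 0 ≤ y 4 + y 5
    · -- T2 via {1,2,3}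
      refine ⟨![y 0, y 4 + y 5 - y 0, 0, 0, y 4, y 5], ⟨?_, ?_,
        ⟨{1,2,3}, Or.inr (Or.inl rfl), ?_⟩⟩, ?_⟩
      · intro hc
        have c1 := congrFun hc 1; have c2 := congrFun hc 2; have c3 := congrFun hc 3
        simp at c1 c2 c3
        exact hT (Or.inr (Or.inl ⟨c2.symm, c3.symm, by omega⟩))
      · intro j; fin_cases j <;> simp <;> omega
      · intro j hj
        fin_cases j
        · exact absurd rfl hj
        · decide
        · decide
        · decide
        · exact absurd rfl hj
        · exact absurd rfl hj
      · exact Or.inr (Or.inl ⟨rfl, rfl, by simp; omega⟩)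
    · -- T1 via {1,2,3}
      refine ⟨![y 0, 0, 0, y 0 - (y 4 + y 5), y 4, y 5], ⟨?_, ?_,
        ⟨{1,2,3}, Or.inr (Or.inl rfl), ?_⟩⟩, ?_⟩
      · intro hc
        have c1 := congrFun hc 1; have c2 := congrFun hc 2; have c3 := congrFun hc 3
        simp at c1 c2 c3
        exact hT (Or.inl ⟨c1.symm, c2.symm, by omega⟩)
      · intro j; fin_cases j <;> simp <;> omega
      · intro j hj
        fin_cases j
        · exact absurd rfl hj
        · decide
        · decide
        · decide
        · exact absurd rfl hj
        · exact absurd rfl hj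
      · exact Or.inl ⟨rfl, rfl, by simp; omega⟩
  · by_cases hE : y 5 ≤ y 0 + y 1
    · -- T2 via {2,3,4}
      refine ⟨![y 0, y 1, 0, 0, y 0 + y 1 - y 5, y 5], ⟨?_, ?_,
        ⟨{2,3,4}, Or.inr (Or.inr (Or.inl rfl)), ?_⟩⟩, ?_⟩
      · intro hc
        have c4 := congrFun hc 4
        simp at c4
        omega
      · intro j; fin_cases j <;> simp <;> omega
      · intro j hj
        fin_cases j
        · exact absurd rfl hj
        · exact absurd rfl hj
        · decide
        · decide
        · decide
        · exact absurd rfl hj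
      · exact Or.inr (Or.inl ⟨rfl, rfl, by simp; omega⟩)
    · -- T3 via {2,3,4}
      refine ⟨![y 0, y 1, y 5 - (y 0 + y 1), 0, 0, y 5], ⟨?_, ?_,
        ⟨{2,3,4}, Or.inr (Or.inr (Or.inl rfl)), ?_⟩⟩, ?_⟩
      · intro hc
        have c2 := congrFun hc 2; have c3 := congrFun hc 3; have c4 := congrFun hc 4
        simp at c2 c3 c4
        exact hT (Or.inr (Or.inr ⟨c3.symm, c4.symm, by omega⟩))
      · intro j; fin_cases j <;> simp <;> omega
      · intro j hj
        fin_cases j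
        · exact absurd rfl hj
        · exact absurd rfl hj
        · decide
        · decide
        · decide
        · exact absurd rfl hj
      · exact Or.inr (Or.inr ⟨rfl, rfl, by simp; omega⟩)

theorem Tstep : ∀ t u, T t → Move PN63 t u → ¬ T u := by
  rintro t u hTt ⟨hne, hle, a, ha, hmem⟩ hTu
  have hl0 := hle 0; have hl1 := hle 1; have hl2 := hle 2
  have hl3 := hle 3; have hl4 := hle 4; have hl5 := hle 5
  have hfix : ∀ k, k ∉ a → u k = t k := fun k hk => by
    by_contra h; exact hk (hmem k h)
  obtain ⟨j, hj⟩ := Function.ne_iff.mp hne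
  have hjlt : u j < t j := lt_of_le_of_ne (hle j) hj
  simp only [PN63, Set.mem_insert_iff, Set.mem_singleton_iff] at ha
  unfold T at hTt hTu
  rcases ha with rfl | rfl | rfl | rfl
  · have f3 : u 3 = t 3 := hfix 3 (by decide)
    have f4 : u 4 = t 4 := hfix 4 (by decide)
    have f5 : u 5 = t 5 := hfix 5 (by decide)
    have hlt : u 0 + u 1 + u 2 < t 0 + t 1 + t 2 := by
      fin_cases j
      · have : u 0 < t 0 := hjlt; omega
      · have : u 1 < t 1 := hjlt; omega
      · have : u 2 < t 2 := hjlt; omega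
      · exact absurd f3 (ne_of_lt hjlt)
      · exact absurd f4 (ne_of_lt hjlt)
      · exact absurd f5 (ne_of_lt hjlt)
    rcases hTt with h | h | h <;> rcases hTu with h' | h' | h' <;> omega
  · have f0 : u 0 = t 0 := hfix 0 (by decide)
    have f4 : u 4 = t 4 := hfix 4 (by decide)
    have f5 : u 5 = t 5 := hfix 5 (by decide)
    have hlt : u 1 + u 2 + u 3 < t 1 + t 2 + t 3 := by
      fin_cases j
      · exact absurd f0 (ne_of_lt hjlt)
      · have : u 1 < t 1 := hjlt; omega
      · have : u 2 < t 2 := hjlt; omega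
      · have : u 3 < t 3 := hjlt; omega
      · exact absurd f4 (ne_of_lt hjlt)
      · exact absurd f5 (ne_of_lt hjlt)
    rcases hTt with h | h | h <;> rcases hTu with h' | h' | h' <;> omega
  · have f0 : u 0 = t 0 := hfix 0 (by decide)
    have f1 : u 1 = t 1 := hfix 1 (by decide)
    have f5 : u 5 = t 5 := hfix 5 (by decide)
    have hlt : u 2 + u 3 + u 4 < t 2 + t 3 + t 4 := by
      fin_cases j
      · exact absurd f0 (ne_of_lt hjlt)
      · exact absurd f1 (ne_of_lt hjlt)
      · have : u 2 < t 2 := hjlt; omega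
      · have : u 3 < t 3 := hjlt; omega
      · have : u 4 < t 4 := hjlt; omega
      · exact absurd f5 (ne_of_lt hjlt)
    rcases hTt with h | h | h <;> rcases hTu with h' | h' | h' <;> omega
  · have f0 : u 0 = t 0 := hfix 0 (by decide)
    have f1 : u 1 = t 1 := hfix 1 (by decide)
    have f2 : u 2 = t 2 := hfix 2 (by decide)
    have hlt : u 3 + u 4 + u 5 < t 3 + t 4 + t 5 := by
      fin_cases j
      · exact absurd f0 (ne_of_lt hjlt)
      · exact absurd f1 (ne_of_lt hjlt)
      · exact absurd f2 (ne_of_lt hjlt)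
      · have : u 3 < t 3 := hjlt; omega
      · have : u 4 < t 4 := hjlt; omega
      · have : u 5 < t 5 := hjlt; omega
    rcases hTt with h | h | h <;> rcases hTu with h' | h' | h' <;> omega

theorem TPPos : ∀ n y, Finset.univ.sum y ≤ n → T y → PPos PN63 y := by
  intro n
  induction n using Nat.strong_induction_on with
  | _ n IH =>
  intro y hn hT
  rw [PPos_iff]
  intro u hmv hPu
  have hTu : ¬ T u := Tstep y u hT hmv
  obtain ⟨v, hmv', hTv⟩ := escape u hTu
  have h1 : Finset.univ.sum u < Finset.univ.sum y := move_sum_lt hmv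
  have h2 : Finset.univ.sum v < Finset.univ.sum u := move_sum_lt hmv'
  have hPv : PPos PN63 v := IH (n - 1) (by omega) v (by omega) hTv
  exact (PPos_iff _ _).mp hPu v hmv' hPv

theorem PPos_to_T : ∀ y, PPos PN63 y → T y := by
  intro y hP
  by_contra hT
  obtain ⟨u, hmv, hTu⟩ := escape y hT
  exact (PPos_iff _ _).mp hP u hmv (TPPos _ u le_rfl hTu)

theorem Sp' (B C : ℕ) : PPos CN52 ![B, C, 0, B + C, 0] := by
  have h := shift52 3 _ (Sp (B + C) B C le_rfl)
  have he : (fun j => (![0, B + C, 0, B, C] : Fin 5 → ℕ) (j + 3)) = ![B, C, 0, B + C, 0] := by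
    funext j; fin_cases j <;> rfl
  rwa [he] at h

/-- (i) a CN(8,3) position normalized with square minima 0 at
distance three apart, p = (0,x₁,x₂,0,x₄,x₅,x₆,x₇), has the same outcome class
as the CN(5,2) position (x₁,x₂,x₄,x₅+x₆,x₇); (ii) a position normalized with
adjacent square minima, p = (0,0,x₂,…,x₇), whose excess vector (x₂,…,x₇) is a
P-position of PN(6,3), also has (up to rotation/reflection) minima at distance
three apart, and its associated CN(5,2) position is a P-position of CN(5,2). -/
theorem cn83_subspace_reductions :
    (∀ p : Fin 8 → ℕ, p 0 = 0 → p 3 = 0 →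
      (PPos CN83 p ↔ PPos CN52 ![p 1, p 2, p 4, p 5 + p 6, p 7])) ∧
    (∀ p : Fin 8 → ℕ, p 0 = 0 → p 1 = 0 →
      PPos PN63 ![p 2, p 3, p 4, p 5, p 6, p 7] →
      ∃ (k : Fin 8) (s : Bool),
        p (dih8 k s 0) = 0 ∧ p (dih8 k s 3) = 0 ∧
        PPos CN52 ![p (dih8 k s 1), p (dih8 k s 2), p (dih8 k s 4),
          p (dih8 k s 5) + p (dih8 k s 6), p (dih8 k s 7)]) := by
  constructor
  · intro p h0 h3
    exact bisim CN83 CN52 R1 fwd1 bwd1 p _ ⟨h0, h3, by simp, by simp, by simp, by simp, by simp⟩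
  · intro p h0 h1 hP
    have hT := PPos_to_T _ hP
    unfold T at hT
    simp only [cv6_0, cv6_1, cv6_2, cv6_3, cv6_4, cv6_5] at hT
    rcases hT with ⟨ha, hb, hc⟩ | ⟨ha, hb, hc⟩ | ⟨ha, hb, hc⟩
    · -- p3 = 0, p4 = 0, p2 = p5+p6+p7 : k = 0
      refine ⟨0, false, h0, ?_, ?_⟩
      · show p 3 = 0; exact ha
      · show PPos CN52 ![p 1, p 2, p 4, p 5 + p 6, p 7]
        have e : (![p 1, p 2, p 4, p 5 + p 6, p 7] : Fin 5 → ℕ) =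
            ![0, (p 5 + p 6) + p 7, 0, p 5 + p 6, p 7] := by
          funext j
          fin_cases j
          · exact h1
          · show p 2 = p 5 + p 6 + p 7; omega
          · exact hb
          · rfl
          · rfl
        rw [e]
        exact Sp _ _ _ le_rfl
    · -- p4 = 0, p5 = 0, p2+p3 = p6+p7 : k = 1
      refine ⟨1, false, ?_, ?_, ?_⟩
      · show p 1 = 0; exact h1
      · show p 4 = 0; exact ha
      · show PPos CN52 ![p 2, p 3, p 5, p 6 + p 7, p 0]
        have e : (![p 2, p 3, p 5, p 6 + p 7, p 0] : Fin 5 → ℕ) =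
            ![p 2, p 3, 0, p 2 + p 3, 0] := by
          funext j
          fin_cases j
          · rfl
          · rfl
          · exact hb
          · show p 6 + p 7 = p 2 + p 3; omega
          · exact h0
        rw [e]
        exact Sp' (p 2) (p 3)
    · -- p5 = 0, p6 = 0, p2+p3+p4 = p7 : k = 5
      refine ⟨5, false, ?_, ?_, ?_⟩
      · show p 5 = 0; exact ha
      · show p 0 = 0; exact h0
      · show PPos CN52 ![p 6, p 7, p 1, p 2 + p 3, p 4]
        have e : (![p 6, p 7, p 1, p 2 + p 3, p 4] : Fin 5 → ℕ) =
            ![0, (p 2 + p 3) + p 4, 0, p 2 + p 3, p 4] := by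
          funext j
          fin_cases j
          · exact hb
          · show p 7 = p 2 + p 3 + p 4; omega
          · exact h1
          · rfl
          · rfl
        rw [e]
        exact Sp _ _ _ le_rfl
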